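/- Over the alphabet A = {a,b,c} with set of prohibitions S = {aa, cab, acac}, there is no maximal crucial word: for every k, the word b^k·aca (k copies of b followed by aca) is crucial with respect to S, so crucial words of arbitrarily large length exist. -/
import Mathlib


inductive ABC : Type
  | a | b | c
deriving DecidableEq

open ABC

/-- The prohibition set `{aa, cab, acac}`. -/
def Sabc : Set (List ABC) := {[a,a], [c,a,b], [a,c,a,c]}

/-- A word is crucial w.r.t. `Sabc` if it is free from `Sabc` and appending any
letter creates a prohibited factor. -/
def CrucialAbc (w : List ABC) : Prop :=
  (∀ v ∈ Sabc, ¬ v <:+: w) ∧ ∀ x : ABC, ∃ v ∈ Sabc, v <:+: (w ++ [x])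

/-- There is no maximal crucial word w.r.t. `{aa, cab, acac}`: the word
`b^k a c a` is crucial for every `k`, so there are crucial words of
arbitrarily large length. -/
theorem no_maximal_crucial_word :
    (∀ k : ℕ, CrucialAbc (List.replicate k b ++ [a,c,a])) ∧
    (∀ N : ℕ, ∃ w : List ABC, CrucialAbc w ∧ N ≤ w.length) := by
  have key : ∀ (v : List ABC) (x : ABC) (t : List ABC), v = x :: t → x ≠ b →
      ¬ v <:+: [a,c,a] → ∀ k, ¬ v <:+: (List.replicate k b ++ [a,c,a]) := by
    intro v x t hv hx h0 k
    induction k with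
    | zero => simpa using h0
    | succ n ih =>
      rw [List.replicate_succ, List.cons_append, List.infix_cons_iff]
      rintro (hpre | hinf)
      · rw [hv, List.cons_prefix_cons] at hpre
        exact hx hpre.1
      · exact ih hinf
  have crucial : ∀ k : ℕ, CrucialAbc (List.replicate k b ++ [a,c,a]) := by
    intro k
    constructor
    · intro v hv
      rcases hv with h | h | h
      · subst h; exact key _ a [a] rfl (by simp) (by decide) k
      · subst h; exact key _ c [a,b] rfl (by simp) (by decide) k
      · subst h; exact key _ a [c,a,c] rfl (by simp) (by decide) k
    · intro x
      cases x with
      | a =>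
        refine ⟨[a,a], Or.inl rfl, ?_⟩
        refine List.IsSuffix.isInfix ?_
        rw [List.append_assoc]
        exact (show [a,a] <:+ [a,c,a] ++ [a] from ⟨[a,c], rfl⟩).trans
          (List.suffix_append _ _)
      | b =>
        refine ⟨[c,a,b], Or.inr (Or.inl rfl), ?_⟩
        refine List.IsSuffix.isInfix ?_
        rw [List.append_assoc]
        exact (show [c,a,b] <:+ [a,c,a] ++ [b] from ⟨[a], rfl⟩).trans
          (List.suffix_append _ _)
      | c =>
        refine ⟨[a,c,a,c], Or.inr (Or.inr rfl), ?_⟩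
        refine List.IsSuffix.isInfix ?_
        rw [List.append_assoc]
        exact (show [a,c,a,c] <:+ [a,c,a] ++ [c] from ⟨[], rfl⟩).trans
          (List.suffix_append _ _)
  refine ⟨crucial, fun N => ⟨List.replicate N b ++ [a,c,a], crucial N, ?_⟩⟩
  simp
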